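/- Every vector γ in ℤ² (the root lattice of type A2) has a unique cluster expansion: a unique way to write γ = Σ m_α α with m_α ∈ ℤ≥0 over the five almost positive roots {−α₁, −α₂, α₁, α₂, α₁+α₂} of type A2, such that m_α m_β = 0 whenever {α,β} is one of the incompatible pairs {−α₁,α₁}, {−α₁,α₁+α₂}, {−α₂,α₂}, {−α₂,α₁+α₂}, {α₁,α₂}. -/
import Mathlib
set_option maxHeartbeats 1000000


/-- The five almost positive roots of type A₂:
−α₁, −α₂, α₁, α₂, α₁+α₂ (in this order). -/
def rootsA2 : Fin 5 → ℤ × ℤ := ![(-1, 0), (0, -1), (1, 0), (0, 1), (1, 1)]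

lemma sumA2 (m : Fin 5 → ℕ) :
    (∑ k, (m k : ℤ) • rootsA2 k)
      = ((m 2 : ℤ) + m 4 - m 0, (m 3 : ℤ) + m 4 - m 1) := by
  simp [Fin.sum_univ_five, rootsA2, Prod.ext_iff]
  constructor <;> ring

theorem stmt16 (γ : ℤ × ℤ) :
    ∃! m : Fin 5 → ℕ,
      (∑ k, (m k : ℤ) • rootsA2 k) = γ ∧
      m 0 * m 2 = 0 ∧ m 0 * m 4 = 0 ∧ m 1 * m 3 = 0 ∧
      m 1 * m 4 = 0 ∧ m 2 * m 3 = 0 := by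
  obtain ⟨x, y⟩ := γ
  set m4 : ℕ := (min x y).toNat with hm4
  set m : Fin 5 → ℕ := ![(-x).toNat, (-y).toNat, x.toNat - m4, y.toNat - m4, m4] with hm
  have hm0 : m 0 = (-x).toNat := rfl
  have hm1 : m 1 = (-y).toNat := rfl
  have hm2 : m 2 = x.toNat - m4 := rfl
  have hm3 : m 3 = y.toNat - m4 := rfl
  have hm4' : m 4 = m4 := rfl
  clear_value m
  refine ⟨m, ⟨?_, ?_, ?_, ?_, ?_, ?_⟩, ?_⟩
  · rw [sumA2, hm0, hm1, hm2, hm3, hm4', Prod.ext_iff]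
    constructor <;> simp <;> omega
  · rw [hm0, hm2]; rcases le_or_gt 0 x with h | h <;> simp <;> omega
  · rw [hm0, hm4']; rcases le_or_gt 0 x with h | h <;> simp [hm4] <;> omega
  · rw [hm1, hm3]; rcases le_or_gt 0 y with h | h <;> simp <;> omega
  · rw [hm1, hm4']; rcases le_or_gt 0 y with h | h <;> simp [hm4] <;> omega
  · rw [hm2, hm3]; simp [hm4]; omega
  · rintro n ⟨hsum, h02, h04, h13, h14, h23⟩
    rw [sumA2, Prod.ext_iff] at hsum
    obtain ⟨hx, hy⟩ := hsum
    rw [Nat.mul_eq_zero] at h02 h04 h13 h14 h23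
    funext i
    fin_cases i
    · show n 0 = m 0; rw [hm0]; omega
    · show n 1 = m 1; rw [hm1]; omega
    · show n 2 = m 2; rw [hm2, hm4]; omega
    · show n 3 = m 3; rw [hm3, hm4]; omega
    · show n 4 = m 4; rw [hm4', hm4]; omega
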